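/- For every t ∈ (-1, -1/√2) ∪ (-1/√2, 1) and every n ≥ 0, the polynomials (p_n) associated to the pencil Θ₁ satisfy p_n(√2·t - 1) = T_n(t) + t·U_{n-1}(t) - (1/2)·(U_{n-1}(t) - U_{n-1}(-1/√2))/(t + 1/√2), where T_n and U_n are the Chebyshev polynomials of the first and second kind and U_{-1} = 0. -/

import Mathlib

open Real Polynomial

theorem aux_three_term (t e T0 T1 T2 u0 u1 u2 v0 v1 v2 : ℝ) (h : t + e ≠ 0)
    (hT : T2 = 2 * t * T1 - T0) (hu : u2 = 2 * t * u1 - u0)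
    (hv : v2 = 2 * (-e) * v1 - v0) :
    T2 + t * u2 - 1 / 2 * (u2 - v2) / (t + e)
      = 2 * t * (T1 + t * u1 - 1 / 2 * (u1 - v1) / (t + e))
        - (T0 + t * u0 - 1 / 2 * (u0 - v0) / (t + e)) - v1 := by
  subst hT hu hv
  field_simp
  ring


theorem p_chebyshev_representation
    (p : ℕ → ℝ → ℝ)
    (hp0 : ∀ x : ℝ, p 0 x = 1)
    (hp1 : ∀ x : ℝ, p 1 x = Real.sqrt 2 * x + Real.sqrt 2)
    (hrec0 : ∀ x : ℝ, -(2 * x * p 0 x) - Real.sqrt 2 * x * p 1 x + p 2 x = 0)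
    (hrec1 : ∀ x : ℝ, -(Real.sqrt 2 * x * p 0 x) - 2 * x * p 1 x - Real.sqrt 2 * x * p 2 x + p 3 x = 0)
    (hrec : ∀ (n : ℕ) (x : ℝ), p n x - Real.sqrt 2 * x * p (n+1) x - 2 * x * p (n+2) x
      - Real.sqrt 2 * x * p (n+3) x + p (n+4) x = 0) :
    ∀ t : ℝ, (t ∈ Set.Ioo (-1 : ℝ) (-(1 / Real.sqrt 2)) ∪ Set.Ioo (-(1 / Real.sqrt 2)) 1) →
      ∀ n : ℕ,
        p n (Real.sqrt 2 * t - 1) =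
          (Polynomial.Chebyshev.T ℝ n).eval t + t * (Polynomial.Chebyshev.U ℝ ((n : ℤ) - 1)).eval t
            - (1 / 2) * ((Polynomial.Chebyshev.U ℝ ((n : ℤ) - 1)).eval t
                - (Polynomial.Chebyshev.U ℝ ((n : ℤ) - 1)).eval (-(1 / Real.sqrt 2)))
              / (t + 1 / Real.sqrt 2) := by
  intro t ht
  have hs2 : Real.sqrt 2 * Real.sqrt 2 = 2 := Real.mul_self_sqrt (by norm_num)
  have hspos : (0:ℝ) < Real.sqrt 2 := Real.sqrt_pos.mpr (by norm_num)
  have hs0 : Real.sqrt 2 ≠ 0 := ne_of_gt hspos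
  have hc : t + 1 / Real.sqrt 2 ≠ 0 := by
    have h1 : 0 < 1 / Real.sqrt 2 := by positivity
    rcases ht with ⟨ha, hb⟩ | ⟨ha, hb⟩
    · have : t + 1 / Real.sqrt 2 < 0 := by linarith
      linarith
    · have : 0 < t + 1 / Real.sqrt 2 := by linarith
      linarith
  set x : ℝ := Real.sqrt 2 * t - 1 with hxdef
  set Q : ℤ → ℝ := fun m =>
    (Polynomial.Chebyshev.T ℝ m).eval t + t * (Polynomial.Chebyshev.U ℝ (m - 1)).eval t
      - (1 / 2) * ((Polynomial.Chebyshev.U ℝ (m - 1)).eval t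
          - (Polynomial.Chebyshev.U ℝ (m - 1)).eval (-(1 / Real.sqrt 2)))
        / (t + 1 / Real.sqrt 2) with hQ
  have hA : ∀ m : ℤ, Q (m + 2) = 2 * t * Q (m + 1) - Q m
      - (Polynomial.Chebyshev.U ℝ m).eval (-(1 / Real.sqrt 2)) := by
    intro m
    have hT : (Polynomial.Chebyshev.T ℝ (m + 2)).eval t
        = 2 * t * (Polynomial.Chebyshev.T ℝ (m + 1)).eval t
          - (Polynomial.Chebyshev.T ℝ m).eval t := by
      rw [Polynomial.Chebyshev.T_add_two]; simp
    have hu : (Polynomial.Chebyshev.U ℝ (m + 1)).eval t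
        = 2 * t * (Polynomial.Chebyshev.U ℝ m).eval t
          - (Polynomial.Chebyshev.U ℝ (m - 1)).eval t := by
      have := Polynomial.Chebyshev.U_add_two ℝ (m - 1)
      rw [show (m - 1) + 2 = m + 1 from by ring, show (m - 1) + 1 = m from by ring] at this
      rw [this]; simp
    have hv : (Polynomial.Chebyshev.U ℝ (m + 1)).eval (-(1 / Real.sqrt 2))
        = 2 * (-(1 / Real.sqrt 2)) * (Polynomial.Chebyshev.U ℝ m).eval (-(1 / Real.sqrt 2))
          - (Polynomial.Chebyshev.U ℝ (m - 1)).eval (-(1 / Real.sqrt 2)) := by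
      have := Polynomial.Chebyshev.U_add_two ℝ (m - 1)
      rw [show (m - 1) + 2 = m + 1 from by ring, show (m - 1) + 1 = m from by ring] at this
      rw [this]; simp
    simp only [hQ, show (m + 2) - 1 = m + 1 from by ring, show (m + 1) - 1 = m from by ring]
    exact aux_three_term t (1 / Real.sqrt 2) _ _ _ _ _ _ _ _ _ hc hT hu hv
  have hB : ∀ m : ℤ, (Polynomial.Chebyshev.U ℝ (m + 2)).eval (-(1 / Real.sqrt 2))
      + Real.sqrt 2 * (Polynomial.Chebyshev.U ℝ (m + 1)).eval (-(1 / Real.sqrt 2))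
      + (Polynomial.Chebyshev.U ℝ m).eval (-(1 / Real.sqrt 2)) = 0 := by
    intro m
    rw [Polynomial.Chebyshev.U_add_two]
    simp only [Polynomial.eval_sub, Polynomial.eval_mul, Polynomial.eval_ofNat, Polynomial.eval_X]
    have h2c : 2 * (-(1 / Real.sqrt 2)) = -Real.sqrt 2 := by
      field_simp
      rw [Real.sq_sqrt (by norm_num : (0:ℝ) ≤ 2)]
    rw [h2c]
    ring
  have hQrec : ∀ m : ℤ, Q (m + 4) = Real.sqrt 2 * x * Q (m + 3) + 2 * x * Q (m + 2)
      + Real.sqrt 2 * x * Q (m + 1) - Q m := by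
    intro m
    have a0 := hA m
    have a1 := hA (m + 1)
    have a2 := hA (m + 2)
    rw [show (m + 1) + 2 = m + 3 from by ring, show (m + 1) + 1 = m + 2 from by ring] at a1
    rw [show (m + 2) + 2 = m + 4 from by ring, show (m + 2) + 1 = m + 3 from by ring] at a2
    have b := hB m
    rw [hxdef]
    linear_combination a2 + Real.sqrt 2 * a1 + a0 - b - (t * (Q (m + 3) + Q (m + 1))) * hs2
  have hQ0 : Q 0 = 1 := by
    simp [hQ, Polynomial.Chebyshev.T_zero, show (0:ℤ) - 1 = -1 from rfl,
      Polynomial.Chebyshev.U_neg_one]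
  have hQ1 : Q 1 = 2 * t := by
    simp [hQ, Polynomial.Chebyshev.T_one, show (1:ℤ) - 1 = 0 from rfl,
      Polynomial.Chebyshev.U_zero]
    ring
  have hU0c : (Polynomial.Chebyshev.U ℝ 0).eval (-(1 / Real.sqrt 2)) = 1 := by
    simp [Polynomial.Chebyshev.U_zero]
  have hU1c : (Polynomial.Chebyshev.U ℝ 1).eval (-(1 / Real.sqrt 2)) = -Real.sqrt 2 := by
    simp [Polynomial.Chebyshev.U_one]
    field_simp
    rw [Real.sq_sqrt (by norm_num : (0:ℝ) ≤ 2)]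
  have hQ2 : Q 2 = 4 * t ^ 2 - 2 := by
    have := hA 0
    rw [show (0:ℤ) + 2 = 2 from rfl, show (0:ℤ) + 1 = 1 from rfl, hQ0, hQ1, hU0c] at this
    rw [this]; ring
  have hQ3 : Q 3 = 8 * t ^ 3 - 6 * t + Real.sqrt 2 := by
    have := hA 1
    rw [show (1:ℤ) + 2 = 3 from rfl, show (1:ℤ) + 1 = 2 from rfl, hQ1, hQ2, hU1c] at this
    rw [this]; ring
  have key : ∀ n : ℕ, p n x = Q (n : ℤ) := by
    intro n
    induction n using Nat.strong_induction_on with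
    | _ n ih =>
      match n, ih with
      | 0, _ => rw [hp0]; push_cast; rw [hQ0]
      | 1, _ => rw [hp1]; push_cast; rw [hQ1]; rw [hxdef]
                linear_combination t * hs2
      | 2, _ =>
        have h := hrec0 x
        rw [hp0, hp1] at h
        push_cast; rw [hQ2, hxdef]
        rw [hxdef] at h
        linear_combination h + ((Real.sqrt 2 * t - 1) ^ 2 + (Real.sqrt 2 * t - 1) + 2 * t ^ 2) * hs2
      | 3, _ =>
        have h2 : p 2 x = 4 * t ^ 2 - 2 := by
          have h := hrec0 x
          rw [hp0, hp1] at h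
          rw [hxdef] at h ⊢
          linear_combination h + ((Real.sqrt 2 * t - 1) ^ 2 + (Real.sqrt 2 * t - 1) + 2 * t ^ 2) * hs2
        have h := hrec1 x
        rw [hp0, hp1] at h
        push_cast; rw [hQ3, hxdef]
        rw [hxdef] at h h2
        linear_combination h + Real.sqrt 2 * (Real.sqrt 2 * t - 1) * h2
          + (2 * Real.sqrt 2 * t ^ 2 + 4 * t ^ 3 - 3 * t) * hs2
      | (m + 4), ih =>
        have k0 := ih m (by omega)
        have k1 := ih (m + 1) (by omega)
        have k2 := ih (m + 2) (by omega)
        have k3 := ih (m + 3) (by omega)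
        have hr := hrec m x
        have hq := hQrec (m : ℤ)
        push_cast at k1 k2 k3 ⊢
        rw [k0, k1, k2, k3] at hr
        linear_combination hr - hq
  intro n
  exact key n
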